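/- The unique Nash equilibrium of the game H5 is irrational valued: some player's equilibrium strategy assigns an irrational probability to some action. In particular 1 − 1/√6 and 3 − √6 are irrational numbers in (0,1). -/

import Mathlib

open Set

/-- Expected payoff in a 3-player game where each player has two actions
(`true` = action 1, `false` = action 2), given the probabilities `p q r` of
playing action 1. -/
noncomputable def exp3 (f : Bool → Bool → Bool → ℝ) (p q r : ℝ) : ℝ :=
  p*q*r * f true true true + p*q*(1-r) * f true true false +
  p*(1-q)*r * f true false true + p*(1-q)*(1-r) * f true false false +
  (1-p)*q*r * f false true true + (1-p)*q*(1-r) * f false true false +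
  (1-p)*(1-q)*r * f false false true + (1-p)*(1-q)*(1-r) * f false false false

/-- Payoff to player `i` in the 3-player zero-sum game H5; `true` = action 1. -/
noncomputable def H5 (i : Fin 3) (a b c : Bool) : ℝ :=
  match a, b, c with
  | true,  true,  true  => ![-4, 2, 2] i
  | true,  true,  false => ![-2, 1, 1] i
  | true,  false, true  => ![-2, 1, 1] i
  | true,  false, false => ![0, 0, 0] i
  | false, true,  true  => ![0, 0, 0] i
  | false, true,  false => ![-2, 1, 1] i
  | false, false, true  => ![-2, 1, 1] i
  | false, false, false => ![-6, 3, 3] i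

/-- `(p,q,r)` is a (mixed) Nash equilibrium of H5. -/
def H5NE (p q r : ℝ) : Prop :=
  p ∈ Icc (0:ℝ) 1 ∧ q ∈ Icc (0:ℝ) 1 ∧ r ∈ Icc (0:ℝ) 1 ∧
  (∀ p' ∈ Icc (0:ℝ) 1, exp3 (H5 0) p' q r ≤ exp3 (H5 0) p q r) ∧
  (∀ q' ∈ Icc (0:ℝ) 1, exp3 (H5 1) p q' r ≤ exp3 (H5 1) p q r) ∧
  (∀ r' ∈ Icc (0:ℝ) 1, exp3 (H5 2) p q r' ≤ exp3 (H5 2) p q r)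

lemma irr_sqrt6 : Irrational (Real.sqrt 6) := by
  rw [show (6:ℝ) = ((6:ℕ):ℝ) by norm_num, irrational_sqrt_natCast_iff]
  rintro ⟨k, hk⟩
  rcases Nat.lt_or_ge k 3 with h | h
  · interval_cases k <;> omega
  · nlinarith

lemma irr_of_quad {x : ℝ} (hx : x*x - 6*x + 3 = 0) : Irrational x := by
  rintro ⟨y, rfl⟩
  have h2 : ((3 - y : ℚ) : ℝ)^2 = 6 := by push_cast; nlinarith [hx]
  have h3 : Real.sqrt 6 = |((3 - y : ℚ) : ℝ)| := by
    rw [← h2, Real.sqrt_sq_eq_abs]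
  have h4 : Real.sqrt 6 = ((|3 - y| : ℚ) : ℝ) := by rw [h3]; push_cast; ring
  exact irr_sqrt6 ⟨|3 - y|, h4.symm⟩

set_option maxHeartbeats 1000000 in
lemma quad_of_NE {p q r : ℝ} (h : H5NE p q r) : q*q - 6*q + 3 = 0 := by
  obtain ⟨⟨hp0, hp1⟩, ⟨hq0, hq1⟩, ⟨hr0, hr1⟩, h1, h2, h3⟩ := h
  have e01 : (0:ℝ) ∈ Icc (0:ℝ) 1 := by constructor <;> norm_num
  have e11 : (1:ℝ) ∈ Icc (0:ℝ) 1 := by constructor <;> norm_num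
  have hA0 := h1 0 e01; have hA1 := h1 1 e11
  have hB0 := h2 0 e01; have hB1 := h2 1 e11
  have hC0 := h3 0 e01; have hC1 := h3 1 e11
  simp only [exp3, H5, Matrix.cons_val_zero, Matrix.cons_val_one, Matrix.head_cons,
    Matrix.cons_val_two, Matrix.tail_cons] at hA0 hA1 hB0 hB1 hC0 hC1
  have fA0 : 0 ≤ (6-6*q-6*r+2*q*r) * p := by linarith [hA0]
  have fA1 : 0 ≤ (6-6*q-6*r+2*q*r) * (p-1) := by linarith [hA1]
  have fB0 : 0 ≤ (-2+3*p+r-p*r) * q := by linarith [hB0]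
  have fB1 : 0 ≤ (-2+3*p+r-p*r) * (q-1) := by linarith [hB1]
  have fC0 : 0 ≤ (-2+3*p+q-p*q) * r := by linarith [hC0]
  have fC1 : 0 ≤ (-2+3*p+q-p*q) * (r-1) := by linarith [hC1]
  clear hA0 hA1 hB0 hB1 hC0 hC1
  have hq : (-2+3*p+r-p*r) = 0 ∨ q = 0 ∨ q = 1 := by
    rcases lt_trichotomy (-2+3*p+r-p*r) 0 with h | h | h
    · refine Or.inr (Or.inl (le_antisymm ?_ hq0))
      by_contra h'; push_neg at h'
      exact absurd fB0 (not_le.2 (mul_neg_of_neg_of_pos h h'))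
    · exact Or.inl h
    · refine Or.inr (Or.inr (le_antisymm hq1 ?_))
      by_contra h'; push_neg at h'
      exact absurd fB1 (not_le.2 (mul_neg_of_pos_of_neg h (by linarith)))
  have hr : (-2+3*p+q-p*q) = 0 ∨ r = 0 ∨ r = 1 := by
    rcases lt_trichotomy (-2+3*p+q-p*q) 0 with h | h | h
    · refine Or.inr (Or.inl (le_antisymm ?_ hr0))
      by_contra h'; push_neg at h'
      exact absurd fC0 (not_le.2 (mul_neg_of_neg_of_pos h h'))
    · exact Or.inl h
    · refine Or.inr (Or.inr (le_antisymm hr1 ?_))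
      by_contra h'; push_neg at h'
      exact absurd fC1 (not_le.2 (mul_neg_of_pos_of_neg h (by linarith)))
  rcases hq with hB | rfl | rfl
  · rcases hr with hC | rfl | rfl
    · -- interior: B = 0, C = 0
      have hpne : p ≠ 1 := by intro h; rw [h] at hB; linarith
      have hqr : q = r := by
        have h0 : (1-p)*(q-r) = 0 := by linear_combination hC - hB
        rcases mul_eq_zero.mp h0 with h | h
        · exact absurd (by linarith : p = 1) hpne
        · linarith
      have hp : (6-6*q-6*r+2*q*r) = 0 := by
        rcases lt_trichotomy (6-6*q-6*r+2*q*r) 0 with h | h | h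
        · have hp' : p = 0 := by
            refine le_antisymm ?_ hp0
            by_contra h'; push_neg at h'
            exact absurd fA0 (not_le.2 (mul_neg_of_neg_of_pos h h'))
          rw [hp'] at hB; linarith
        · exact h
        · have hp' : p = 1 := by
            refine le_antisymm hp1 ?_
            by_contra h'; push_neg at h'
            exact absurd fA1 (not_le.2 (mul_neg_of_pos_of_neg h (by linarith)))
          exact absurd hp' hpne
      rw [← hqr] at hp; linarith [hp]
    · -- B = 0, r = 0 : p = 2/3, then q = 0, then contradiction
      exfalso
      have hp23 : p = 2/3 := by linarith [hB]
      rw [hp23] at fC1 fA1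
      have hq' : q = 0 := le_antisymm (by linarith [fC1]) hq0
      rw [hq'] at fA1; linarith [fA1]
    · -- B = 0, r = 1 : p = 1/2, then q = 1, contra fA0
      exfalso
      have hp12 : p = 1/2 := by linarith [hB]
      rw [hp12] at fC0 fA0
      have hq' : q = 1 := le_antisymm hq1 (by linarith [fC0])
      rw [hq'] at fA0; linarith [fA0]
  · -- q = 0
    exfalso
    rcases hr with hC | rfl | rfl
    · have hp23 : p = 2/3 := by linarith [hC]
      rw [hp23] at fB1 fA1
      have hr' : r = 0 := le_antisymm (by linarith [fB1]) hr0
      rw [hr'] at fA1; linarith [fA1]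
    · linarith [fA1, fB1]
    · linarith [fC0, fB1]
  · -- q = 1
    exfalso
    rcases hr with hC | rfl | rfl
    · have hp12 : p = 1/2 := by linarith [hC]
      rw [hp12] at fB0 fA0
      have hr' : r = 1 := le_antisymm hr1 (by linarith [fB0])
      rw [hr'] at fA0; linarith [fA0]
    · linarith [fB0, fC1]
    · linarith [fA0, fB0]

/-- The unique Nash equilibrium of H5 is irrational valued: some player's
equilibrium strategy assigns an irrational probability to some action.
In particular 1 − 1/√6 and 3 − √6 are irrational numbers in (0,1). -/
theorem stmt10 :
    (∀ p q r : ℝ, H5NE p q r → Irrational p ∨ Irrational q ∨ Irrational r) ∧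
    Irrational (1 - 1 / Real.sqrt 6) ∧ Irrational (3 - Real.sqrt 6) ∧
    (1 - 1 / Real.sqrt 6) ∈ Ioo (0:ℝ) 1 ∧ (3 - Real.sqrt 6) ∈ Ioo (0:ℝ) 1 := by
  have h0 : (0:ℝ) < Real.sqrt 6 := Real.sqrt_pos.2 (by norm_num)
  have h2 : (2:ℝ) < Real.sqrt 6 := by
    rw [show (2:ℝ) = Real.sqrt 4 by rw [show (4:ℝ) = 2^2 by norm_num, Real.sqrt_sq]; norm_num]
    exact Real.sqrt_lt_sqrt (by norm_num) (by norm_num)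
  have h3 : Real.sqrt 6 < 3 := by
    rw [show (3:ℝ) = Real.sqrt 9 by rw [show (9:ℝ) = 3^2 by norm_num, Real.sqrt_sq]; norm_num]
    exact Real.sqrt_lt_sqrt (by norm_num) (by norm_num)
  refine ⟨fun p q r h => Or.inr (Or.inl (irr_of_quad (quad_of_NE h))), ?_, ?_, ?_, ?_⟩
  · have := (irr_sqrt6.inv).ratCast_sub 1
    simpa [one_div] using this
  · simpa using irr_sqrt6.ratCast_sub 3
  · constructor
    · have : 1 / Real.sqrt 6 < 1 := by rw [div_lt_one h0]; linarith
      linarith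
    · have : 0 < 1 / Real.sqrt 6 := by positivity
      linarith
  · exact ⟨by linarith, by linarith⟩
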